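/- arXiv:1506.06538 — 6 statements merged into one kernel-verified Lean document; each statement's English description precedes it below -/
import Mathlib

section
/- The sequence (a_n) defined by a_0 = 0, a_1 = 1, and a_n = min{ k < n : k + a_k ≥ n } for n ≥ 2 satisfies a_{n+1} ∈ {a_n, a_n + 1} for all n ≥ 1; in particular it is monotone non-decreasing. -/
/-- The sequence defined by `a 0 = 0`, `a 1 = 1`, and for `n ≥ 2`,
`a n = min { k < n : m * k + a k ≥ n }` (for `m = 1` this is the sequence `a` of the paper). -/
noncomputable def jseq (m : ℕ) (n : ℕ) : ℕ :=
  Nat.strongRecOn n (fun n ih =>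
    if n = 0 then 0
    else if n = 1 then 1
    else sInf {k : ℕ | ∃ h : k < n, n ≤ m * k + ih k h})

lemma jseq_def (m n : ℕ) : jseq m n =
    if n = 0 then 0 else if n = 1 then 1
    else sInf {k : ℕ | ∃ _ : k < n, n ≤ m * k + jseq m k} := by
  rw [jseq, Nat.strongRecOn_eq]
  rfl

lemma jseq_zero (m : ℕ) : jseq m 0 = 0 := by rw [jseq_def]; rfl
lemma jseq_one (m : ℕ) : jseq m 1 = 1 := by rw [jseq_def]; rfl

lemma jseq_two_le (m n : ℕ) (hn : 2 ≤ n) :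
    jseq m n = sInf {k : ℕ | k < n ∧ n ≤ m * k + jseq m k} := by
  rw [jseq_def]
  rw [if_neg (by omega), if_neg (by omega)]
  congr 1
  ext k
  exact exists_prop

lemma jseq_prop : ∀ n : ℕ, (1 ≤ n → 1 ≤ jseq 1 n) ∧
    (2 ≤ n → jseq 1 n < n ∧ n ≤ jseq 1 n + jseq 1 (jseq 1 n)) := by
  intro n
  induction n using Nat.strong_induction_on with
  | _ n ih =>
    rcases Nat.lt_or_ge n 2 with h2 | h2
    · refine ⟨fun h1 => ?_, fun h => by omega⟩
      have : n = 1 := by omega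
      simp [this, jseq_one]
    · have hdef := jseq_two_le 1 n h2
      simp only [one_mul] at hdef
      have hne : (n - 1) ∈ {k : ℕ | k < n ∧ n ≤ k + jseq 1 k} := by
        have h1 : 1 ≤ jseq 1 (n - 1) := (ih (n-1) (by omega)).1 (by omega)
        exact ⟨by omega, by omega⟩
      have hmem : jseq 1 n ∈ {k : ℕ | k < n ∧ n ≤ k + jseq 1 k} := by
        rw [hdef]; exact Nat.sInf_mem ⟨_, hne⟩
      obtain ⟨hlt, hge⟩ := hmem
      have hpos : 1 ≤ jseq 1 n := by
        by_contra h
        have h0 : jseq 1 n = 0 := by omega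
        rw [h0, jseq_zero] at hge
        omega
      exact ⟨fun _ => hpos, fun _ => ⟨hlt, hge⟩⟩

lemma jseq_jump : ∀ n : ℕ, 1 ≤ n →
    jseq 1 (n + 1) = jseq 1 n ∨ jseq 1 (n + 1) = jseq 1 n + 1 := by
  intro n
  induction n using Nat.strong_induction_on with
  | _ n ih =>
    intro hn
    rcases Nat.lt_or_ge n 2 with h2 | h2
    · -- n = 1 : show jseq 1 2 = 1
      have hn1 : n = 1 := by omega
      subst hn1
      left
      have hpos : 1 ≤ jseq 1 2 := (jseq_prop 2).1 (by omega)
      have hdef := jseq_two_le 1 2 (by omega)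
      simp only [one_mul] at hdef
      have hle : jseq 1 2 ≤ 1 := by
        rw [hdef]
        exact Nat.sInf_le ⟨by omega, by rw [jseq_one]⟩
      show jseq 1 2 = jseq 1 1
      rw [jseq_one]; omega
    · have hdefn := jseq_two_le 1 n h2
      have hdefs := jseq_two_le 1 (n+1) (by omega)
      simp only [one_mul] at hdefn hdefs
      obtain ⟨hlt, hge⟩ := (jseq_prop n).2 h2
      have hpos : 1 ≤ jseq 1 n := (jseq_prop n).1 hn
      -- f (f n + 1) ≥ f (f n)
      have hmono : jseq 1 (jseq 1 n) ≤ jseq 1 (jseq 1 n + 1) := by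
        rcases ih (jseq 1 n) hlt hpos with h | h <;> omega
      have hmem1 : (jseq 1 n + 1) ∈ {k : ℕ | k < n + 1 ∧ n + 1 ≤ k + jseq 1 k} := by
        refine ⟨by omega, ?_⟩
        have : jseq 1 n + 1 + jseq 1 (jseq 1 n) ≤ jseq 1 n + 1 + jseq 1 (jseq 1 n + 1) := by omega
        omega
      have hub : jseq 1 (n+1) ≤ jseq 1 n + 1 := by
        rw [hdefs]; exact Nat.sInf_le hmem1
      have hmem : jseq 1 (n+1) ∈ {k : ℕ | k < n + 1 ∧ n + 1 ≤ k + jseq 1 k} := by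
        rw [hdefs]; exact Nat.sInf_mem ⟨_, hmem1⟩
      have hlb : jseq 1 n ≤ jseq 1 (n+1) := by
        obtain ⟨hk1, hk2⟩ := hmem
        rcases Nat.lt_or_ge (jseq 1 (n+1)) n with h | h
        · rw [hdefn]
          exact Nat.sInf_le ⟨h, by omega⟩
        · omega
      omega

/-- `a (n+1) ∈ {a n, a n + 1}` for all `n ≥ 1`; in particular `a` is monotone. -/
theorem jseq_succ_mem :
    (∀ n : ℕ, 1 ≤ n → jseq 1 (n + 1) = jseq 1 n ∨ jseq 1 (n + 1) = jseq 1 n + 1) ∧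
      Monotone (jseq 1) := by
  refine ⟨jseq_jump, monotone_nat_of_le_succ fun n => ?_⟩
  rcases Nat.eq_zero_or_pos n with h | h
  · subst h; rw [jseq_zero]; exact Nat.zero_le _
  · rcases jseq_jump n h with heq | heq <;> omega
end

section
/- Bettina's Theorem: Let F denote the Fibonacci numbers with f_1 = 1, f_2 = 1, f_{k+2} = f_{k+1} + f_k, and let n ≥ 1 have Zeckendorf representation n = f_{i_1} + f_{i_2} + ... + f_{i_r} (with i_1 > i_2 > ... > i_r ≥ 2 and no two indices consecutive). Then the sequence a defined by a_0 = 0, a_1 = 1, a_n = min{k < n : k + a_k ≥ n} satisfies a_n = f_{i_1 - 1} + f_{i_2 - 1} + ... + f_{i_r - 1}. -/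
theorem jseq_eq (m n : ℕ) : jseq m n =
    if n = 0 then 0 else if n = 1 then 1
    else sInf {k : ℕ | k < n ∧ n ≤ m * k + jseq m k} := by
  have : jseq m n = Nat.lt_wfRel.wf.fix (C := fun _ => ℕ) (fun n ih =>
    if n = 0 then 0
    else if n = 1 then 1
    else sInf {k : ℕ | ∃ h : k < n, n ≤ m * k + ih k h}) n := rfl
  rw [this, WellFounded.fix_eq]
  have h2 : ∀ k, (Nat.lt_wfRel.wf.fix (C := fun _ => ℕ) (fun n ih =>
    if n = 0 then 0
    else if n = 1 then 1
    else sInf {k : ℕ | ∃ h : k < n, n ≤ m * k + ih k h})) k = jseq m k := fun _ => rfl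
  simp only [h2]
  split_ifs with h0 h1 <;> try rfl
  congr 1; ext k; exact exists_prop

def S (n : ℕ) : Set ℕ := {k : ℕ | k < n ∧ n ≤ k + jseq 1 k}

theorem a_zero : jseq 1 0 = 0 := by rw [jseq_eq]; simp
theorem a_one : jseq 1 1 = 1 := by rw [jseq_eq]; simp

theorem a_two {n : ℕ} (h : 2 ≤ n) : jseq 1 n = sInf (S n) := by
  rw [jseq_eq]
  have h0 : n ≠ 0 := by omega
  have h1 : n ≠ 1 := by omega
  simp only [h0, h1, if_false, S, one_mul]

theorem a_basics : ∀ n, 1 ≤ n → 1 ≤ jseq 1 n ∧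
    (2 ≤ n → jseq 1 n < n ∧ n ≤ jseq 1 n + jseq 1 (jseq 1 n)) := by
  intro n
  induction n using Nat.strong_induction_on with
  | _ n IH =>
    intro hn
    rcases Nat.lt_or_ge n 2 with h2 | h2
    · have : n = 1 := by omega
      subst this
      refine ⟨by rw [a_one], by omega⟩
    · have hprev : 1 ≤ jseq 1 (n-1) := (IH (n-1) (by omega) (by omega)).1
      have hmem : (n-1) ∈ S n := ⟨by omega, by omega⟩
      have hne : (S n).Nonempty := ⟨n-1, hmem⟩
      have hInf : sInf (S n) ∈ S n := Nat.sInf_mem hne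
      rw [a_two h2]
      refine ⟨?_, fun _ => ⟨hInf.1, hInf.2⟩⟩
      by_contra h
      have h0 : sInf (S n) = 0 := by omega
      rw [h0] at hInf
      have := hInf.2
      rw [a_zero] at this
      omega
theorem a_le_of_mem {n k : ℕ} (h2 : 2 ≤ n) (hk : k ∈ S n) : jseq 1 n ≤ k := by
  rw [a_two h2]; exact Nat.sInf_le hk

theorem a_mono : Monotone (jseq 1) := by
  apply monotone_nat_of_le_succ
  intro n
  rcases Nat.eq_or_lt_of_le (Nat.zero_le n) with h0 | h0
  · rw [← h0, a_zero]; omega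
  · have h2 : 2 ≤ n + 1 := by omega
    have hb := a_basics (n+1) (by omega)
    have hj1 : 1 ≤ jseq 1 (n+1) := hb.1
    have hlt : jseq 1 (n+1) < n + 1 := (hb.2 h2).1
    rcases Nat.lt_or_ge n 2 with hn2 | hn2
    · have : n = 1 := by omega
      subst this; rw [a_one]; omega
    · rcases Nat.lt_or_ge (jseq 1 (n+1)) n with h | h
      · exact a_le_of_mem hn2 ⟨h, by
          have := (hb.2 h2).2
          omega⟩
      · have := (a_basics n (by omega)).2 hn2
        omega

/-- increasing lists with gaps ≥ 2 and entries ≥ b -/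
def Ok : ℕ → List ℕ → Prop
  | _, [] => True
  | b, x :: xs => b ≤ x ∧ Ok (x+2) xs

theorem ok_mono : ∀ (r : List ℕ) {b c : ℕ}, Ok b r → c ≤ b → Ok c r
  | [], _, _, _, _ => trivial
  | x :: xs, b, c, ⟨h1, h2⟩, hcb => ⟨le_trans hcb h1, h2⟩

theorem ok_all : ∀ (r : List ℕ) {b : ℕ}, Ok b r → ∀ i ∈ r, b ≤ i
  | [], _, _, i, hi => absurd hi List.not_mem_nil
  | x :: xs, b, ⟨h1, h2⟩, i, hi => by
      rcases List.mem_cons.1 hi with h | h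
      · omega
      · have := ok_all xs h2 i h; omega

theorem ok_map_sub : ∀ (r : List ℕ) {b : ℕ}, 1 ≤ b → Ok b r → Ok (b-1) (r.map (· - 1)) := by
  intro r
  induction r with
  | nil => intro b _ _; trivial
  | cons x xs ih =>
    intro b hb h
    obtain ⟨h1, h2⟩ := h
    show Ok (b-1) ((x-1) :: xs.map (· - 1))
    refine ⟨by omega, ?_⟩
    exact ok_mono _ (ih (by omega) h2) (show (x-1)+2 ≤ x+2-1 by omega)

def V (r : List ℕ) : ℕ := (r.map Nat.fib).sum
def Sh (r : List ℕ) : ℕ := (r.map (fun i => Nat.fib (i-1))).sum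
def Sh2 (r : List ℕ) : ℕ := (r.map (fun i => Nat.fib (i-2))).sum

theorem fib_split {i : ℕ} (h : 2 ≤ i) : Nat.fib i = Nat.fib (i-1) + Nat.fib (i-2) := by
  obtain ⟨j, rfl⟩ : ∃ j, i = j + 2 := ⟨i - 2, by omega⟩
  rw [Nat.fib_add_two]
  simp [Nat.add_sub_cancel]
  omega

theorem V_map_sub (r : List ℕ) : V (r.map (· - 1)) = Sh r := by
  simp only [V, Sh, List.map_map]
  rfl

theorem Sh_map_sub (r : List ℕ) : Sh (r.map (· - 1)) = Sh2 r := by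
  simp only [Sh, Sh2, List.map_map]
  rfl

theorem V_eq : ∀ (r : List ℕ), (∀ i ∈ r, 2 ≤ i) → V r = Sh r + Sh2 r
  | [], _ => rfl
  | x :: xs, h => by
      have hx : 2 ≤ x := h x (List.mem_cons_self)
      have ih := V_eq xs (fun i hi => h i (List.mem_cons_of_mem x hi))
      simp only [V, Sh, Sh2, List.map_cons, List.sum_cons] at *
      rw [fib_split hx]
      omega

/-- normalize `2 :: xs` shifted: carry `c` satisfies shift-so-far = fib c -/
def upAux (c : ℕ) : List ℕ → List ℕ
  | [] => [c]
  | x :: xs => if x = c + 2 then upAux x xs else c :: (x-1) :: xs.map (· - 1)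

theorem upAux_ok : ∀ (xs : List ℕ) (c : ℕ), 2 ≤ c → Ok (c+2) xs → Ok c (upAux c xs) := by
  intro xs
  induction xs with
  | nil => intro c hc _; exact ⟨le_refl c, trivial⟩
  | cons x xs ih =>
    intro c hc h
    obtain ⟨h1, h2⟩ := h
    show Ok c (if x = c + 2 then upAux x xs else c :: (x-1) :: xs.map (· - 1))
    by_cases hx : x = c + 2
    · rw [if_pos hx]
      subst hx
      exact ok_mono _ (ih (c+2) (by omega) h2) (by omega)
    · rw [if_neg hx]
      refine ⟨le_refl c, by omega, ?_⟩
      have := ok_map_sub xs (b := x + 2) (by omega) h2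
      exact ok_mono _ this (show (x-1)+2 ≤ x+2-1 by omega)

theorem upAux_val : ∀ (xs : List ℕ) (c : ℕ), 2 ≤ c → Ok (c+2) xs →
    V (upAux c xs) = Nat.fib c + Sh xs := by
  intro xs
  induction xs with
  | nil => intro c hc _; simp [upAux, V, Sh]
  | cons x xs ih =>
    intro c hc h
    obtain ⟨h1, h2⟩ := h
    show V (if x = c + 2 then upAux x xs else c :: (x-1) :: xs.map (· - 1)) = _
    by_cases hx : x = c + 2
    · rw [if_pos hx]
      subst hx
      rw [ih (c+2) (by omega) h2]
      have : Nat.fib (c+2) = Nat.fib (c+1) + Nat.fib c := by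
        rw [Nat.fib_add_two]; omega
      simp only [Sh, List.map_cons, List.sum_cons]
      have hc1 : c + 2 - 1 = c + 1 := by omega
      rw [hc1, this]
      omega
    · rw [if_neg hx]
      simp only [V, Sh, List.map_cons, List.sum_cons]
      have := V_map_sub xs
      simp only [V, Sh] at this
      omega

theorem upAux_sh : ∀ (xs : List ℕ) (c : ℕ), 2 ≤ c → Ok (c+2) xs →
    Nat.fib (c-1) + Sh2 xs ≤ Sh (upAux c xs) := by
  intro xs
  induction xs with
  | nil => intro c hc _; simp [upAux, Sh, Sh2]
  | cons x xs ih =>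
    intro c hc h
    obtain ⟨h1, h2⟩ := h
    show _ ≤ Sh (if x = c + 2 then upAux x xs else c :: (x-1) :: xs.map (· - 1))
    by_cases hx : x = c + 2
    · rw [if_pos hx]
      subst hx
      have hih := ih (c+2) (by omega) h2
      have hfib : Nat.fib (c+2-1) = Nat.fib c + Nat.fib (c-1) := by
        have h3 : c + 2 - 1 = (c-1) + 2 := by omega
        rw [h3, Nat.fib_add_two]
        have : c - 1 + 1 = c := by omega
        rw [this]
        omega
      simp only [Sh2, List.map_cons, List.sum_cons]
      simp only [Sh2] at hih
      rw [hfib] at hih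
      have hc2 : c + 2 - 2 = c := by omega
      rw [hc2]
      omega
    · rw [if_neg hx]
      simp only [Sh, Sh2, List.map_cons, List.sum_cons]
      have := Sh_map_sub xs
      simp only [Sh, Sh2] at this
      have hxx : x - 1 - 1 = x - 2 := by omega
      rw [hxx]
      omega

/-- list whose value is `fib m - 1` -/
def E : ℕ → List ℕ
  | 0 => []
  | 1 => []
  | 2 => []
  | 3 => [2]
  | (m+4) => E (m+2) ++ [m+3]

theorem E_ok : ∀ (m : ℕ) (v : List ℕ), Ok (m+1) v → Ok 2 v → Ok 2 (E m ++ v) := by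
  intro m
  induction m using Nat.strong_induction_on with
  | _ m IH =>
    match m with
    | 0 => intro v _ h2; exact h2
    | 1 => intro v _ h2; exact h2
    | 2 => intro v _ h2; exact h2
    | 3 =>
      intro v h1 _
      exact ⟨le_refl 2, h1⟩
    | (m+4) =>
      intro v h1 h2
      show Ok 2 (E (m+2) ++ [m+3] ++ v)
      rw [List.append_assoc]
      apply IH (m+2) (by omega)
      · exact ⟨by omega, h1⟩
      · exact ⟨by omega, h1⟩

theorem E_val : ∀ (m : ℕ), 1 ≤ m → V (E m) + 1 = Nat.fib m := by
  intro m
  induction m using Nat.strong_induction_on with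
  | _ m IH =>
    match m with
    | 0 => intro h; omega
    | 1 => intro _; simp [E, V]
    | 2 => intro _; simp [E, V]
    | 3 => intro _; simp [E, V]; decide
    | (m+4) =>
      intro _
      show V (E (m+2) ++ [m+3]) + 1 = _
      have : V (E (m+2) ++ [m+3]) = V (E (m+2)) + Nat.fib (m+3) := by
        simp [V, List.map_append]
      rw [this]
      have hih := IH (m+2) (by omega) (by omega)
      have : Nat.fib (m+4) = Nat.fib (m+2) + Nat.fib (m+3) := by
        rw [Nat.fib_add_two]
      omega

theorem E_sh : ∀ (m : ℕ), Sh (E m) ≤ Nat.fib (m-1) := by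
  intro m
  induction m using Nat.strong_induction_on with
  | _ m IH =>
    match m with
    | 0 => simp [E, Sh]
    | 1 => simp [E, Sh]
    | 2 => simp [E, Sh]
    | 3 => simp [E, Sh]
    | (m+4) =>
      show Sh (E (m+2) ++ [m+3]) ≤ _
      have h1 : Sh (E (m+2) ++ [m+3]) = Sh (E (m+2)) + Nat.fib (m+2) := by
        simp [Sh, List.map_append]
      rw [h1]
      have hih := IH (m+2) (by omega)
      have h2 : Nat.fib (m+4-1) = Nat.fib (m+1) + Nat.fib (m+2) := by
        show Nat.fib (m+3) = _
        rw [Nat.fib_add_two]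
      have h3 : m + 2 - 1 = m + 1 := by omega
      rw [h3] at hih
      omega

theorem V_append (u v : List ℕ) : V (u ++ v) = V u + V v := by simp [V]
theorem Sh_append (u v : List ℕ) : Sh (u ++ v) = Sh u + Sh v := by simp [Sh]

theorem fib_two_le {x : ℕ} (h : 3 ≤ x) : 2 ≤ Nat.fib x := by
  have := Nat.fib_mono h
  rw [show Nat.fib 3 = 2 from rfl] at this
  exact this

theorem main : ∀ n, ∀ r : List ℕ, Ok 2 r → V r = n → 1 ≤ n → jseq 1 n = Sh r := by
  intro n
  induction n using Nat.strong_induction_on with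
  | _ n IH =>
  intro r hok hv hn
  match r, hok with
  | [], _ => simp [V] at hv; omega
  | x :: xs, ⟨hx2, hoxs⟩ =>
    have hall : ∀ i ∈ x :: xs, 2 ≤ i := by
      intro i hi
      rcases List.mem_cons.1 hi with h | h
      · omega
      · have := ok_all xs hoxs i h; omega
    have hfx : 1 ≤ Nat.fib x := Nat.fib_pos.2 (by omega)
    have hfx1 : 1 ≤ Nat.fib (x-1) := Nat.fib_pos.2 (by omega)
    have hVc : V (x::xs) = Nat.fib x + V xs := by simp [V]
    have hShc : Sh (x::xs) = Nat.fib (x-1) + Sh xs := by simp [Sh]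
    have hSh2c : Sh2 (x::xs) = Nat.fib (x-2) + Sh2 xs := by simp [Sh2]
    have hVxs : V xs = Sh xs + Sh2 xs := V_eq xs (fun i hi => hall i (List.mem_cons_of_mem x hi))
    have hveq : V (x::xs) = Sh (x::xs) + Sh2 (x::xs) := V_eq _ hall
    have hf1 : Nat.fib 1 = 1 := rfl
    have hf0 : Nat.fib 0 = 0 := rfl
    have hf2 : Nat.fib 2 = 1 := rfl
    rcases Nat.lt_or_ge n 2 with hn2 | hn2
    · -- n = 1
      have hn1 : n = 1 := by omega
      have hxs : xs = [] := by
        cases xs with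
        | nil => rfl
        | cons y ys =>
          exfalso
          obtain ⟨hy, hys⟩ := hoxs
          have h1 : 1 ≤ Nat.fib y := Nat.fib_pos.2 (by omega)
          have h2 : V (x :: y :: ys) = Nat.fib x + (Nat.fib y + V ys) := by simp [V]
          omega
      subst hxs
      have hx2' : x = 2 := by
        by_contra hne
        have h3 : (2:ℕ) ≤ Nat.fib x := fib_two_le (by omega)
        have hV : V [x] = Nat.fib x := by simp [V]
        omega
      subst hx2'
      rw [hn1, a_one]
      simp [Sh]
    · -- n ≥ 2
      have hc1 : 1 ≤ Sh2 (x::xs) := by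
        by_cases hx : x = 2
        · subst hx
          cases xs with
          | nil =>
            exfalso
            have hv2 : V [2] = 1 := by simp [V]
            omega
          | cons y ys =>
            obtain ⟨hy, _⟩ := hoxs
            have h1 : 1 ≤ Nat.fib (y-2) := Nat.fib_pos.2 (by omega)
            have h2 : Sh2 (2 :: y :: ys) = Nat.fib 0 + (Nat.fib (y-2) + Sh2 ys) := by
              simp [Sh2]
            omega
        · have h1 : 1 ≤ Nat.fib (x-2) := Nat.fib_pos.2 (by omega)
          omega
      have hs1 : 1 ≤ Sh (x::xs) := by omega
      have hsn : Sh (x::xs) < n := by omega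
      -- the value of a at s = Sh (x::xs)
      have hup : Sh (x::xs) + jseq 1 (Sh (x::xs)) ≥ n := by
        by_cases hx : x = 2
        · subst hx
          have hok2 : Ok 2 (upAux 2 xs) := upAux_ok xs 2 (by omega) hoxs
          have e1 : Nat.fib (2-1) = 1 := rfl
          have e2 : Nat.fib (2-2) = 0 := rfl
          have e3 : Nat.fib 2 = 1 := rfl
          have hval : V (upAux 2 xs) = Sh (2::xs) := by
            rw [upAux_val xs 2 (by omega) hoxs, hShc]
            omega
          have has : jseq 1 (Sh (2::xs)) = Sh (upAux 2 xs) :=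
            IH _ hsn _ hok2 hval hs1
          have hsh := upAux_sh xs 2 (by omega) hoxs
          omega
        · have hx3 : 3 ≤ x := by omega
          have hokm : Ok 2 ((x-1) :: xs.map (· - 1)) := by
            refine ⟨by omega, ?_⟩
            exact ok_mono _ (ok_map_sub xs (by omega) hoxs) (show (x-1)+2 ≤ x+2-1 by omega)
          have hvalm : V ((x-1) :: xs.map (· - 1)) = Sh (x::xs) := by
            have : V ((x-1) :: xs.map (· - 1)) = Nat.fib (x-1) + V (xs.map (· - 1)) := by
              simp [V]
            rw [this, V_map_sub, hShc]
          have hshm : Sh ((x-1) :: xs.map (· - 1)) = Sh2 (x::xs) := by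
            have h1 : Sh ((x-1) :: xs.map (· - 1)) = Nat.fib (x-1-1) + Sh (xs.map (· - 1)) := by
              simp [Sh]
            have hxx : x - 1 - 1 = x - 2 := by omega
            rw [h1, hxx, Sh_map_sub, hSh2c]
          have has : jseq 1 (Sh (x::xs)) = Sh2 (x::xs) := by
            rw [IH _ hsn _ hokm hvalm hs1, hshm]
          omega
      have hmemS : Sh (x::xs) ∈ S n := ⟨hsn, by omega⟩
      -- lower bound
      have hlow : ∀ k ∈ S n, Sh (x::xs) ≤ k := by
        intro k hk
        by_contra hks
        push_neg at hks
        rcases Nat.lt_or_ge (Sh (x::xs)) 2 with hs2 | hs2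
        · -- s = 1, k = 0
          have hk0 : k = 0 := by omega
          have := hk.2
          rw [hk0, a_zero] at this
          omega
        · have hkle : k ≤ Sh (x::xs) - 1 := by omega
          have hmono : jseq 1 k ≤ jseq 1 (Sh (x::xs) - 1) := a_mono (by omega)
          have hdown : jseq 1 (Sh (x::xs) - 1) ≤ Sh2 (x::xs) := by
            by_cases hx : x = 2
            · subst hx
              have hokm : Ok 2 (xs.map (· - 1)) :=
                ok_mono _ (ok_map_sub xs (by omega) hoxs) (by omega)
              have e1 : Nat.fib (2-1) = 1 := rfl
              have e2 : Nat.fib (2-2) = 0 := rfl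
              have hvalm : V (xs.map (· - 1)) = Sh (2::xs) - 1 := by
                rw [V_map_sub, hShc]
                omega
              have has : jseq 1 (Sh (2::xs) - 1) = Sh (xs.map (· - 1)) :=
                IH _ (by omega) _ hokm hvalm (by omega)
              rw [has, Sh_map_sub]
              omega
            · have hx3 : 3 ≤ x := by omega
              have hv' : Ok (x+2-1) (xs.map (· - 1)) := ok_map_sub xs (by omega) hoxs
              have hokm : Ok 2 (E (x-1) ++ xs.map (· - 1)) := by
                apply E_ok
                · exact ok_mono _ hv' (by omega)
                · exact ok_mono _ hv' (by omega)
              have hEv := E_val (x-1) (by omega)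
              have hvalm : V (E (x-1) ++ xs.map (· - 1)) = Sh (x::xs) - 1 := by
                rw [V_append, V_map_sub, hShc]
                omega
              have has : jseq 1 (Sh (x::xs) - 1) = Sh (E (x-1) ++ xs.map (· - 1)) :=
                IH _ (by omega) _ hokm hvalm (by omega)
              rw [has, Sh_append, Sh_map_sub]
              have hEs := E_sh (x-1)
              have hxx : x - 1 - 1 = x - 2 := by omega
              rw [hxx] at hEs
              omega
          have := hk.2
          omega
      have h2n : 2 ≤ n := hn2
      rw [a_two h2n]
      have hne : (S n).Nonempty := ⟨_, hmemS⟩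
      exact le_antisymm (Nat.sInf_le hmemS) (hlow _ (Nat.sInf_mem hne))

theorem chain_bound : ∀ (xs : List ℕ) (x : ℕ),
    List.Chain' (fun a b => a+2 ≤ b) (x::xs) → ∀ i ∈ xs, x+2 ≤ i := by
  intro xs
  induction xs with
  | nil => intro x _ i hi; exact absurd hi List.not_mem_nil
  | cons y ys ih =>
    intro x h i hi
    change List.IsChain _ _ at h; rw [List.isChain_cons_cons] at h
    rcases List.mem_cons.1 hi with rfl | hi'
    · exact h.1
    · have := ih y h.2 i hi'
      omega

theorem ok_of_chain : ∀ (r : List ℕ) (b : ℕ),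
    List.Chain' (fun a b => a+2 ≤ b) r → (∀ i ∈ r, b ≤ i) → Ok b r := by
  intro r
  induction r with
  | nil => intro b _ _; trivial
  | cons x xs ih =>
    intro b h hb
    refine ⟨hb x (List.mem_cons_self), ?_⟩
    exact ih (x+2) (List.IsChain.tail h) (chain_bound xs x h)

/-- Bettina's theorem: if `n = f_{i_1} + ... + f_{i_r}` is the Zeckendorf representation
of `n ≥ 1` (indices strictly decreasing, no two consecutive, all `≥ 2`), then
`a n = f_{i_1 - 1} + ... + f_{i_r - 1}`. -/
theorem bettina (n : ℕ) (l : List ℕ) (hn : 1 ≤ n)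
    (hchain : l.Chain' (fun x y => y + 2 ≤ x))
    (hge : ∀ i ∈ l, 2 ≤ i)
    (hsum : n = (l.map Nat.fib).sum) :
    jseq 1 n = (l.map (fun i => Nat.fib (i - 1))).sum := by
  have hcr : List.Chain' (fun a b => a+2 ≤ b) l.reverse := by
    change List.IsChain _ _; rw [List.isChain_reverse]
    exact hchain
  have hok : Ok 2 l.reverse := ok_of_chain _ 2 hcr (fun i hi => hge i (List.mem_reverse.1 hi))
  have hV : V l.reverse = n := by
    rw [V, List.map_reverse, List.sum_reverse, ← hsum]
  have := main n l.reverse hok hV hn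
  rw [this, Sh, List.map_reverse, List.sum_reverse]
end

section
/- In the infinite Jaco graph J_∞(f) for f(x) = mx + c (m ≥ 1, c ≥ 0), for every vertex v_n the sum of its out-degree and in-degree equals f(n) = m·n + c. -/
/-- In-degree of vertex `j` in the infinite linear Jaco graph for `f x = m * x + c`:
`d⁻(v_j)` is the number of tails `1 ≤ i < j` with `f i + i - d⁻(v_i) ≥ j`
(stated subtraction-free as `j + d⁻(v_i) ≤ m * i + c + i`). -/
noncomputable def jacoIndeg (m c : ℕ) (j : ℕ) : ℕ :=
  Nat.strongRecOn j (fun j ih =>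
    ((Finset.Ico 1 j).attach.filter (fun i =>
      j + ih i.1 (Finset.mem_Ico.mp i.2).2 ≤ m * i.1 + c + i.1)).card)

/-- `(v_i, v_j)` is an arc of the infinite Jaco graph `J_∞(mx + c)` iff `1 ≤ i < j` and
`f(i) + i - d⁻(v_i) ≥ j`. -/
def JacoArc (m c i j : ℕ) : Prop :=
  1 ≤ i ∧ i < j ∧ j + jacoIndeg m c i ≤ m * i + c + i

noncomputable instance (m c i j : ℕ) : Decidable (JacoArc m c i j) := by
  unfold JacoArc; infer_instance

/-- Out-degree of `v_i` in the infinite Jaco graph `J_∞(mx + c)`. -/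
noncomputable def jacoOutdegInf (m c i : ℕ) : ℕ := {j | JacoArc m c i j}.ncard

/-- Out-degree of `v_i` in the finite Jaco graph `J_n(mx + c)`. -/
noncomputable def jacoOutdeg (m c n i : ℕ) : ℕ :=
  ((Finset.Icc 1 n).filter (fun j => JacoArc m c i j)).card

/-- Total degree of `v_i` in the underlying graph of `J_n(mx + c)`
(for `i ≤ n` the in-degree in `J_n` agrees with that in `J_∞`). -/
noncomputable def jacoDeg (m c n i : ℕ) : ℕ := jacoIndeg m c i + jacoOutdeg m c n i

/-- Number of arcs of the finite Jaco graph `J_n(mx + c)`. -/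
noncomputable def jacoArcs (m c n : ℕ) : ℕ :=
  (((Finset.Icc 1 n) ×ˢ (Finset.Icc 1 n)).filter (fun p => JacoArc m c p.1 p.2)).card

lemma jacoIndeg_lt (m c n : ℕ) (hn : 1 ≤ n) : jacoIndeg m c n < n := by
  unfold jacoIndeg
  rw [Nat.strongRecOn_eq]
  calc ((Finset.Ico 1 n).attach.filter _).card
      ≤ (Finset.Ico 1 n).attach.card := Finset.card_filter_le _ _
    _ = (Finset.Ico 1 n).card := Finset.card_attach
    _ = n - 1 := by rw [Nat.card_Ico]
    _ < n := by omega

/-- In `J_∞(mx + c)`, `d⁺(v_n) + d⁻(v_n) = m * n + c` for every vertex `v_n`. -/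
theorem jaco_deg_sum (m c n : ℕ) (hm : 1 ≤ m) (hn : 1 ≤ n) :
    jacoOutdegInf m c n + jacoIndeg m c n = m * n + c := by
  have hd : jacoIndeg m c n < n := jacoIndeg_lt m c n hn
  have hmn : n ≤ m * n := Nat.le_mul_of_pos_left n hm
  have hset : {j | JacoArc m c n j} = ↑(Finset.Ioc n (m * n + c + n - jacoIndeg m c n)) := by
    ext j
    simp only [Set.mem_setOf_eq, JacoArc, Finset.coe_Ioc, Set.mem_Ioc]
    omega
  rw [jacoOutdegInf, hset, Set.ncard_coe_finset, Nat.card_Ioc]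
  omega
end

section
/- In the infinite Jaco graph J_∞(f) for f(x) = mx + c (m ≥ 1, c ≥ 0), the in-degrees satisfy d⁻(v_{n+1}) ∈ { d⁻(v_n), d⁻(v_n) + 1 } for all n ≥ 1. -/
lemma jacoIndeg_eq (m c j : ℕ) :
    jacoIndeg m c j =
      ((Finset.Ico 1 j).filter (fun i => j + jacoIndeg m c i ≤ m * i + c + i)).card := by
  rw [jacoIndeg, Nat.strongRecOn_eq]
  rw [show (fun m' (_ : m' < j) => Nat.strongRecOn (motive := fun _ => ℕ) m' _) =
    (fun m' (_ : m' < j) => jacoIndeg m c m') from rfl]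
  apply Finset.card_bij (fun a _ => a.1)
  · intro a ha
    simp only [Finset.mem_filter] at ha ⊢
    exact ⟨a.2, ha.2⟩
  · intro a ha b hb h; exact Subtype.ext h
  · intro b hb
    simp only [Finset.mem_filter] at hb
    exact ⟨⟨b, hb.1⟩, Finset.mem_filter.mpr ⟨Finset.mem_attach _ _, hb.2⟩, rfl⟩

/-- In `J_∞(mx + c)`, `d⁻(v_{n+1}) ∈ {d⁻(v_n), d⁻(v_n) + 1}` for all `n ≥ 1`. -/
theorem jaco_indeg_step (m c n : ℕ) (hm : 1 ≤ m) (hn : 1 ≤ n) :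
    jacoIndeg m c (n + 1) = jacoIndeg m c n ∨
      jacoIndeg m c (n + 1) = jacoIndeg m c n + 1 := by
  induction n using Nat.strong_induction_on with
  | _ n IH =>
  -- step bound from IH
  have step : ∀ k, 1 ≤ k → k < n → jacoIndeg m c (k + 1) ≤ jacoIndeg m c k + 1 := by
    intro k hk1 hkn
    rcases IH k hkn hk1 with h | h <;> omega
  -- chain bound
  have chain : ∀ i i', 1 ≤ i → i ≤ i' → i' ≤ n → jacoIndeg m c i' ≤ jacoIndeg m c i + (i' - i) := by
    intro i i' hi1 hii' hi'n
    obtain ⟨t, rfl⟩ := Nat.exists_eq_add_of_le hii'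
    induction t with
    | zero => simp
    | succ t iht =>
      have h1 : jacoIndeg m c (i + t + 1) ≤ jacoIndeg m c (i + t) + 1 := by
        apply step <;> omega
      have h2 := iht (by omega) (by omega)
      have he : jacoIndeg m c (i + (t + 1)) = jacoIndeg m c (i + t + 1) := by
        rw [show i + (t + 1) = i + t + 1 by omega]
      omega
  set d := jacoIndeg m c with hd
  have hdn : d n < n := jacoIndeg_lt m c n hn
  set A := (Finset.Ico 1 n).filter (fun i => (n+1) + d i ≤ m * i + c + i) with hA
  set B := (Finset.Ico 1 n).filter (fun i => n + d i ≤ m * i + c + i) with hB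
  have hBcard : d n = B.card := by rw [hd, jacoIndeg_eq]
  have hAcard : d (n + 1) = A.card + 1 := by
    rw [hd, jacoIndeg_eq]
    rw [Nat.Ico_succ_right_eq_insert_Ico hn, Finset.filter_insert]
    have hcond : n + 1 + d n ≤ m * n + c + n := by nlinarith
    rw [if_pos hcond, Finset.card_insert_of_notMem (fun h => by simp at h)]
  have hAB : A ⊆ B := by
    intro i hi
    simp only [hA, hB, Finset.mem_filter] at hi ⊢
    exact ⟨hi.1, by omega⟩
  have hdiff : (B \ A).card ≤ 1 := by
    apply Finset.card_le_one.mpr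
    intro a ha b hb
    simp only [hA, hB, Finset.mem_sdiff, Finset.mem_filter, Finset.mem_Ico, not_and, not_le] at ha hb
    have ha2 := ha.2 ha.1.1
    have hb2 := hb.2 hb.1.1
    have hea' := ha.1.2
    have heb' := hb.1.2
    have han := ha.1.1.2
    have hbn := hb.1.1.2
    have hea : n + d a = m * a + c + a := by omega
    have heb : n + d b = m * b + c + b := by omega
    have ha1 : 1 ≤ a := ha.1.1.1
    have hb1 : 1 ≤ b := hb.1.1.1
    clear ha hb
    by_contra hne
    have key : ∀ x y, 1 ≤ x → x < y → y < n → n + d x = m * x + c + x → n + d y = m * y + c + y → False := by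
      intro x y hx1 hxy hyn hex hey
      have hch := chain x y (by omega) (by omega) (by omega)
      obtain ⟨u, hyu, hu1⟩ : ∃ u, y = x + u ∧ 1 ≤ u := ⟨y - x, by omega, by omega⟩
      have hch' : d y ≤ d x + u := by
        have : y - x = u := by omega
        omega
      have hmu : u ≤ m * u := Nat.le_mul_of_pos_left _ hm
      have hmy : m * y = m * x + m * u := by rw [hyu, Nat.mul_add]
      linarith
    rcases Nat.lt_or_ge a b with hab | hab
    · exact key a b ha1 hab (by omega) hea heb
    · exact key b a hb1 (by omega) (by omega) heb hea
  have h1 : A.card ≤ B.card := Finset.card_le_card hAB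
  have h2 : B.card ≤ A.card + 1 := by
    have := Finset.card_sdiff_add_card_eq_card hAB
    omega
  omega
end

section
/- In the infinite Jaco graph J_∞(f) for f(x) = mx + c (m ≥ 1, c ≥ 0), if (v_i, v_k) is an arc and i < j < k, then (v_j, v_k) is also an arc (heads receive arcs from a contiguous interval of tails). -/
lemma jacoIndeg_step (m c j : ℕ) :
    jacoIndeg m c (j + 1) ≤ jacoIndeg m c j + 1 := by
  rw [jacoIndeg_eq m c (j+1), jacoIndeg_eq m c j]
  have h1 : (Finset.Ico 1 (j+1)).filter (fun i =>
      j + 1 + jacoIndeg m c i ≤ m * i + c + i) ⊆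
      insert j ((Finset.Ico 1 j).filter (fun i =>
        j + jacoIndeg m c i ≤ m * i + c + i)) := by
    intro x hx
    simp only [Finset.mem_filter, Finset.mem_Ico] at hx
    rcases Nat.lt_or_ge x j with hxj | hxj
    · exact Finset.mem_insert_of_mem (Finset.mem_filter.mpr
        ⟨Finset.mem_Ico.mpr ⟨hx.1.1, hxj⟩, by omega⟩)
    · have : x = j := by omega
      simp [this]
  calc _ ≤ (insert j ((Finset.Ico 1 j).filter (fun i =>
        j + jacoIndeg m c i ≤ m * i + c + i))).card := Finset.card_le_card h1
    _ ≤ _ := Finset.card_insert_le _ _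

lemma jacoIndeg_le (m c i j : ℕ) (h : i ≤ j) :
    jacoIndeg m c j ≤ jacoIndeg m c i + (j - i) := by
  induction j with
  | zero =>
    have : i = 0 := by omega
    simp [this]
  | succ n ih =>
    rcases Nat.lt_or_ge i (n+1) with hn | hn
    · have := jacoIndeg_step m c n
      have := ih (by omega)
      omega
    · have : i = n + 1 := by omega
      simp [this]


/-- In `J_∞(mx + c)`, if `(v_i, v_k)` is an arc and `i < j < k` then `(v_j, v_k)` is an arc. -/
theorem jaco_arc_interval (m c i j k : ℕ) (hm : 1 ≤ m)
    (h : JacoArc m c i k) (hij : i < j) (hjk : j < k) :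
    JacoArc m c j k := by
  obtain ⟨h1, h2, h3⟩ := h
  refine ⟨by omega, hjk, ?_⟩
  have hle := jacoIndeg_le m c i j (le_of_lt hij)
  have : m * i + (j - i) ≤ m * j := by nlinarith [Nat.sub_add_cancel (le_of_lt hij)]
  omega
end

section
/- For f(x) = mx + c with m ≥ 1, c ≥ 0, the underlying graph of the finite Jaco graph J_{f(1)+1}(f) is the complete graph K_{m+c+1}; consequently, for all i with 1 ≤ i ≤ f(1)+1, the maximum degree of J_i(f) is i−1 and every vertex attains it. -/
lemma jacoIndeg_small (m c : ℕ) (hm : 1 ≤ m) :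
    ∀ j, j ≤ m + c + 1 → jacoIndeg m c j = j - 1 := by
  intro j
  induction j using Nat.strongRecOn with
  | _ j ih =>
    intro hj
    rw [jacoIndeg_eq]
    have : (Finset.Ico 1 j).filter (fun i => j + jacoIndeg m c i ≤ m * i + c + i)
        = Finset.Ico 1 j := by
      apply Finset.filter_true_of_mem
      intro i hi
      obtain ⟨h1, h2⟩ := Finset.mem_Ico.mp hi
      rw [ih i h2 (le_trans h2.le hj)]
      have : m ≤ m * i := Nat.le_mul_of_pos_right m h1
      omega
    rw [this, Nat.card_Ico]

/-- `J_{f(1)+1}(mx+c)` is the complete graph `K_{m+c+1}`; consequently for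
`1 ≤ i ≤ f(1)+1 = m+c+1`, every vertex of `J_i` has degree `i - 1`
(so `Δ(J_i) = i - 1` and every vertex is Jaconian). -/
theorem jaco_initial_complete (m c : ℕ) (hm : 1 ≤ m) :
    (∀ i j : ℕ, 1 ≤ i → i < j → j ≤ m + c + 1 → JacoArc m c i j) ∧
      (∀ i : ℕ, 1 ≤ i → i ≤ m + c + 1 →
        ∀ v : ℕ, 1 ≤ v → v ≤ i → jacoDeg m c i v = i - 1) := by
  have harc : ∀ i j : ℕ, 1 ≤ i → i < j → j ≤ m + c + 1 → JacoArc m c i j := by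
    intro i j hi hij hj
    refine ⟨hi, hij, ?_⟩
    rw [jacoIndeg_small m c hm i (by omega)]
    have : m ≤ m * i := Nat.le_mul_of_pos_right m hi
    omega
  refine ⟨harc, ?_⟩
  intro i hi1 hi2 v hv1 hv2
  rw [jacoDeg, jacoIndeg_small m c hm v (by omega), jacoOutdeg]
  have : (Finset.Icc 1 i).filter (fun j => JacoArc m c v j) = Finset.Ioc v i := by
    ext j
    rw [Finset.mem_filter]
    simp only [Finset.mem_Icc, Finset.mem_Ioc, JacoArc]
    constructor
    · rintro ⟨⟨h1, h2⟩, _, hlt, _⟩; exact ⟨hlt, h2⟩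
    · rintro ⟨h1, h2⟩
      exact ⟨⟨by omega, h2⟩, harc v j hv1 h1 (by omega)⟩
  rw [this, Nat.card_Ioc]
  omega
end
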